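/- Let (γⱼ)_{j∈J} be a finite family of reals and (rⱼ) complex numbers, and define ε(t) = Σⱼ rⱼ·e^{iγⱼt}. Then (1/X)∫₁^X |ε(t)|² dt ≤ Σ_{j,k} |rⱼ·r_k|·min(1, 2/|γⱼ−γ_k|), where the term with γⱼ = γ_k is interpreted as |rⱼ r_k|. -/

import Mathlib

open Real MeasureTheory

lemma exp_norm_one (x : ℝ) (t : ℝ) : ‖Complex.exp (Complex.I * x * t)‖ = 1 := by
  rw [Complex.norm_exp]
  simp [Complex.mul_re]

lemma E_bound (X : ℝ) (hX : 1 ≤ X) (Δ : ℝ) :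
    ‖∫ t in (1:ℝ)..X, Complex.exp (Complex.I * Δ * t)‖ ≤
      X * (if Δ = 0 then 1 else min 1 (2 / |Δ|)) := by
  have hX1 : (0:ℝ) ≤ X - 1 := by linarith
  have hb : ‖∫ t in (1:ℝ)..X, Complex.exp (Complex.I * Δ * t)‖ ≤ 1 * |X - 1| := by
    apply intervalIntegral.norm_integral_le_of_norm_le_const
    intro t _
    exact le_of_eq (exp_norm_one Δ t)
  rw [one_mul, abs_of_nonneg hX1] at hb
  by_cases h : Δ = 0
  · rw [if_pos h, mul_one]
    linarith
  · rw [if_neg h]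
    have hΔ : (0:ℝ) < |Δ| := abs_pos.mpr h
    have hc : (Complex.I * Δ : ℂ) ≠ 0 := by
      simp [Complex.I_ne_zero, Complex.ofReal_eq_zero, h]
    have heval := integral_exp_mul_complex (a := (1:ℝ)) (b := X) hc
    have hb2 : ‖∫ t in (1:ℝ)..X, Complex.exp (Complex.I * Δ * t)‖ ≤ 2 / |Δ| := by
      rw [heval, norm_div]
      have h1 : ‖Complex.exp (Complex.I * Δ * (X:ℝ)) - Complex.exp (Complex.I * Δ * ((1:ℝ):ℂ))‖ ≤ 2 := by
        refine (norm_sub_le _ _).trans ?_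
        have e1 := exp_norm_one Δ X
        have e2 := exp_norm_one Δ 1
        push_cast at e1 e2 ⊢
        rw [e1, e2]; norm_num
      have h2 : ‖(Complex.I * (Δ:ℂ))‖ = |Δ| := by
        simp
      rw [h2]
      push_cast at h1 ⊢
      gcongr
    rw [mul_min_of_nonneg _ _ (by linarith : (0:ℝ) ≤ X), mul_one]
    refine le_min (hb.trans (by linarith)) (hb2.trans ?_)
    nlinarith [div_nonneg (by norm_num : (0:ℝ) ≤ 2) hΔ.le, mul_le_mul_of_nonneg_right hX (div_nonneg (by norm_num : (0:ℝ) ≤ 2) hΔ.le)]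

/-- Mean square bound for a Dirichlet-type sum `ε(t) = Σⱼ rⱼ e^{iγⱼt}`. -/
theorem mean_square_sum_bound
    {J : Type*} [Fintype J] (γ : J → ℝ) (r : J → ℂ) (X : ℝ) (hX : 1 ≤ X) :
    (1 / X) * ∫ t in (1 : ℝ)..X, ‖∑ j, r j * Complex.exp (Complex.I * γ j * t)‖ ^ 2 ≤
      ∑ j, ∑ k, (if γ j = γ k then ‖r j‖ * ‖r k‖
        else ‖r j‖ * ‖r k‖ * min 1 (2 / |γ j - γ k|)) := by
  have hXpos : (0:ℝ) < X := by linarith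
  set f : J → ℝ → ℂ := fun j t => r j * Complex.exp (Complex.I * γ j * t) with hf
  -- pointwise expansion
  have hpt : ∀ t : ℝ, ‖∑ j, f j t‖ ^ 2 =
      (∑ j, ∑ k, (r j * (starRingEnd ℂ) (r k) *
        Complex.exp (Complex.I * (γ j - γ k) * t))).re := by
    intro t
    have hz : ((‖∑ j, f j t‖:ℝ) ^ 2 : ℝ) = ((∑ j, f j t) * (starRingEnd ℂ) (∑ j, f j t)).re := by
      rw [Complex.mul_conj, Complex.ofReal_re, Complex.normSq_eq_norm_sq]
    rw [hz]
    congr 1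
    rw [map_sum, Finset.sum_mul_sum]
    refine Finset.sum_congr rfl fun j _ => Finset.sum_congr rfl fun k _ => ?_
    simp only [hf, map_mul]
    rw [← Complex.exp_conj]
    rw [mul_mul_mul_comm, ← Complex.exp_add]
    congr 2
    simp only [map_mul, Complex.conj_I, Complex.conj_ofReal]
    ring
  -- integrability of each term
  have hcont : ∀ (j k : J), Continuous
      (fun t : ℝ => r j * (starRingEnd ℂ) (r k) * Complex.exp (Complex.I * (γ j - γ k) * t)) := by
    intro j k
    exact continuous_const.mul (Complex.continuous_exp.comp
      (continuous_const.mul Complex.continuous_ofReal))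
  have hint : ∀ (j k : J), IntervalIntegrable
      (fun t => r j * (starRingEnd ℂ) (r k) * Complex.exp (Complex.I * (γ j - γ k) * t))
      volume 1 X := fun j k => (hcont j k).intervalIntegrable 1 X
  have hsumint : IntervalIntegrable
      (fun t => ∑ j, ∑ k, (r j * (starRingEnd ℂ) (r k) *
        Complex.exp (Complex.I * (γ j - γ k) * t))) volume 1 X :=
    (continuous_finset_sum _ fun j _ => continuous_finset_sum _ fun k _ => hcont j k).intervalIntegrable 1 X
  -- rewrite integral
  have hI : (∫ t in (1:ℝ)..X, ‖∑ j, f j t‖ ^ 2) =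
      (∑ j, ∑ k, r j * (starRingEnd ℂ) (r k) *
        ∫ t in (1:ℝ)..X, Complex.exp (Complex.I * (γ j - γ k) * t)).re := by
    simp_rw [hpt, ← Complex.reCLM_apply]
    rw [Complex.reCLM.intervalIntegral_comp_comm hsumint]
    rw [Complex.reCLM_apply]
    congr 1
    rw [intervalIntegral.integral_finset_sum (fun j _ =>
      (continuous_finset_sum _ fun k _ => hcont j k).intervalIntegrable 1 X)]
    refine Finset.sum_congr rfl fun j _ => ?_
    rw [intervalIntegral.integral_finset_sum (fun k _ => hint j k)]
    exact Finset.sum_congr rfl fun k _ => (intervalIntegral.integral_const_mul _ _)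
  rw [hI]
  -- bound
  have key : (∑ j, ∑ k, r j * (starRingEnd ℂ) (r k) *
        ∫ t in (1:ℝ)..X, Complex.exp (Complex.I * (γ j - γ k) * t)).re ≤
      ∑ j, ∑ k, X * (if γ j = γ k then ‖r j‖ * ‖r k‖
        else ‖r j‖ * ‖r k‖ * min 1 (2 / |γ j - γ k|)) := by
    rw [Complex.re_sum]
    refine Finset.sum_le_sum fun j _ => ?_
    rw [Complex.re_sum]
    refine Finset.sum_le_sum fun k _ => ?_
    have h1 : (r j * (starRingEnd ℂ) (r k) *
        ∫ t in (1:ℝ)..X, Complex.exp (Complex.I * (γ j - γ k) * t)).re ≤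
        ‖r j‖ * ‖r k‖ * ‖∫ t in (1:ℝ)..X, Complex.exp (Complex.I * (γ j - γ k) * t)‖ := by
      calc (r j * (starRingEnd ℂ) (r k) *
          ∫ t in (1:ℝ)..X, Complex.exp (Complex.I * (γ j - γ k) * t)).re
          ≤ ‖r j * (starRingEnd ℂ) (r k) *
            ∫ t in (1:ℝ)..X, Complex.exp (Complex.I * (γ j - γ k) * t)‖ :=
            Complex.re_le_norm _
        _ = ‖r j‖ * ‖r k‖ * ‖∫ t in (1:ℝ)..X, Complex.exp (Complex.I * (γ j - γ k) * t)‖ := by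
            rw [norm_mul, norm_mul, RCLike.norm_conj]
    refine h1.trans ?_
    have h2 := E_bound X hX (γ j - γ k)
    have hrr : (0:ℝ) ≤ ‖r j‖ * ‖r k‖ := mul_nonneg (norm_nonneg _) (norm_nonneg _)
    have h3 := mul_le_mul_of_nonneg_left h2 hrr
    rw [Complex.ofReal_sub] at h3
    refine h3.trans_eq ?_
    by_cases h : γ j = γ k
    · rw [if_pos (sub_eq_zero.mpr h), if_pos h]; ring
    · rw [if_neg (sub_ne_zero.mpr h), if_neg h]; ring
  calc (1 / X) * (∑ j, ∑ k, r j * (starRingEnd ℂ) (r k) *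
        ∫ t in (1:ℝ)..X, Complex.exp (Complex.I * (γ j - γ k) * t)).re
      ≤ (1 / X) * ∑ j, ∑ k, X * (if γ j = γ k then ‖r j‖ * ‖r k‖
        else ‖r j‖ * ‖r k‖ * min 1 (2 / |γ j - γ k|)) :=
        mul_le_mul_of_nonneg_left key (by positivity)
    _ = ∑ j, ∑ k, (if γ j = γ k then ‖r j‖ * ‖r k‖
        else ‖r j‖ * ‖r k‖ * min 1 (2 / |γ j - γ k|)) := by
        simp_rw [Finset.mul_sum, ← mul_assoc, one_div, inv_mul_cancel₀ hXpos.ne', one_mul]
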